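/- Let n, ℓ, s, k be positive integers with s ≤ ℓ ≤ n, let p = ℓ/n, and suppose p < 1/7. Then (|R^{ℓ−s}_n| · |stars(k,s)| · 2^s) / |R^ℓ_n| < (7pk)^s, where |R^ℓ_n| = C(n,ℓ)·2^{n−ℓ}. -/

import Mathlib

/-- `stars(k,s)`: the set of finite sequences `β = (β₁,…,β_t)` with each
`β_j ∈ {★,−}^k \ {−}^k` (modeled as `Fin k → Bool` with at least one `true`)
and the total number of `★`'s over all `β_j` equal to `s`. -/
def starsSet (k s : ℕ) : Set (List (Fin k → Bool)) :=
  {l | (∀ b ∈ l, ∃ i, b i = true) ∧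
    (l.map fun b => (Finset.univ.filter fun i => b i = true).card).sum = s}

def cnt {k : ℕ} (b : Fin k → Bool) : ℕ := (Finset.univ.filter fun i => b i = true).card

def allLists (α : Type*) [Fintype α] [DecidableEq α] : ℕ → Finset (List α)
  | 0 => {[]}
  | n+1 => allLists α n ∪ (Finset.univ ×ˢ allLists α n).image fun p => p.1 :: p.2

lemma mem_allLists {α : Type*} [Fintype α] [DecidableEq α] (n : ℕ) (l : List α) :
    l ∈ allLists α n ↔ l.length ≤ n := by
  induction n generalizing l with
  | zero => simp [allLists, List.length_eq_zero_iff]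
  | succ n ih =>
    cases l with
    | nil => simp [allLists, ih]
    | cons a t =>
      simp [allLists, ih, Nat.succ_le_succ_iff]
      omega

noncomputable def starsFinset (k s : ℕ) : Finset (List (Fin k → Bool)) :=
  (allLists (Fin k → Bool) s).filter fun l =>
    (∀ b ∈ l, ∃ i, b i = true) ∧ (l.map fun b => cnt b).sum = s

lemma cnt_pos {k : ℕ} (b : Fin k → Bool) (h : ∃ i, b i = true) : 1 ≤ cnt b := by
  obtain ⟨i, hi⟩ := h
  have : i ∈ Finset.univ.filter fun i => b i = true := by simp [hi]
  exact Finset.card_pos.mpr ⟨i, this⟩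

lemma length_le_sum {k : ℕ} (l : List (Fin k → Bool)) (h : ∀ b ∈ l, ∃ i, b i = true) :
    l.length ≤ (l.map fun b => cnt b).sum := by
  induction l with
  | nil => simp
  | cons a t ih =>
    simp only [List.map_cons, List.sum_cons, List.length_cons]
    have h1 : 1 ≤ cnt a := cnt_pos a (h a (by simp))
    have h2 := ih (fun b hb => h b (by simp [hb]))
    omega

lemma starsSet_subset (k s : ℕ) : starsSet k s ⊆ ↑(starsFinset k s) := by
  intro l hl
  obtain ⟨h1, h2⟩ := hl
  simp only [starsFinset, Finset.coe_filter, Set.mem_setOf_eq, mem_allLists]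
  refine ⟨?_, h1, h2⟩
  calc l.length ≤ (l.map fun b => cnt b).sum := length_le_sum l h1
    _ = s := h2

lemma card_cnt_le (k j : ℕ) :
    (Finset.univ.filter fun b : Fin k → Bool => cnt b = j).card ≤ k.choose j := by
  have := Finset.card_le_card_of_injOn
    (f := fun b : Fin k → Bool => Finset.univ.filter fun i => b i = true)
    (s := Finset.univ.filter fun b : Fin k → Bool => cnt b = j)
    (t := Finset.powersetCard j Finset.univ)
    (by intro b hb
        have hb2 : cnt b = j := (Finset.mem_filter.mp hb).2
        simp only [cnt] at hb2
        simpa [Finset.mem_powersetCard] using hb2)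
    (by intro b hb b' hb' hbb
        funext i
        have : (i ∈ Finset.univ.filter fun i => b i = true) ↔
            (i ∈ Finset.univ.filter fun i => b' i = true) := by
          dsimp only at hbb; rw [hbb]
        simpa using this)
  simpa using this

lemma starsFinset_zero (k : ℕ) : starsFinset k 0 ⊆ {[]} := by
  intro l hl
  simp only [starsFinset, Finset.mem_filter] at hl
  obtain ⟨-, h1, h2⟩ := hl
  have := length_le_sum l h1
  rw [h2] at this
  simpa [List.length_eq_zero_iff] using Nat.le_zero.mp this

lemma starsFinset_succ_subset (k s : ℕ) :
    starsFinset k (s+1) ⊆ (Finset.univ.filter fun b : Fin k → Bool =>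
        1 ≤ cnt b ∧ cnt b ≤ s+1).biUnion
      fun b => (starsFinset k (s+1 - cnt b)).image (List.cons b) := by
  intro l hl
  simp only [starsFinset, Finset.mem_filter, mem_allLists] at hl
  obtain ⟨hlen, h1, h2⟩ := hl
  cases l with
  | nil => simp at h2
  | cons a t =>
    simp only [List.map_cons, List.sum_cons] at h2
    have ha : 1 ≤ cnt a := cnt_pos a (h1 a (by simp))
    have ht1 : ∀ b ∈ t, ∃ i, b i = true := fun b hb => h1 b (by simp [hb])
    have hca : cnt a ≤ s + 1 := by omega
    simp only [Finset.mem_biUnion, Finset.mem_filter, Finset.mem_univ, true_and]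
    refine ⟨a, ⟨ha, hca⟩, ?_⟩
    rw [Finset.mem_image]
    refine ⟨t, ?_, rfl⟩
    simp only [starsFinset, Finset.mem_filter, mem_allLists]
    refine ⟨?_, ht1, by omega⟩
    have := length_le_sum t ht1
    simp only [List.length_cons] at hlen
    omega

lemma choose_two_pow_le (k j : ℕ) (hj : 1 ≤ j) : k.choose j * 2^(j-1) ≤ k^j := by
  induction j with
  | zero => omega
  | succ j ih =>
    rcases Nat.eq_or_lt_of_le hj with h | h
    · simp [← h]
    · have hj1 : 1 ≤ j := by omega
      have ihh := ih hj1
      have key : 2 * k.choose (j+1) ≤ k.choose j * k := by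
        have h1 : k.choose (j+1) * (j+1) = k.choose j * (k - j) := Nat.choose_succ_right_eq k j
        have h2 : 2 * k.choose (j+1) ≤ k.choose (j+1) * (j+1) := by
          have : 2 ≤ j + 1 := by omega
          calc 2 * k.choose (j+1) = k.choose (j+1) * 2 := by ring
            _ ≤ k.choose (j+1) * (j+1) := Nat.mul_le_mul_left _ this
        calc 2 * k.choose (j+1) ≤ k.choose j * (k - j) := h1 ▸ h2
          _ ≤ k.choose j * k := Nat.mul_le_mul_left _ (Nat.sub_le _ _)
      have : k.choose (j+1) * 2^j = (2 * k.choose (j+1)) * 2^(j-1) := by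
        rcases j with _ | j'
        · omega
        · simp [pow_succ]; ring
      calc k.choose (j+1) * 2^(j+1-1) = (2 * k.choose (j+1)) * 2^(j-1) := this
        _ ≤ (k.choose j * k) * 2^(j-1) := Nat.mul_le_mul_right _ key
        _ = (k.choose j * 2^(j-1)) * k := by ring
        _ ≤ k^j * k := Nat.mul_le_mul_right _ ihh
        _ = k^(j+1) := by ring

lemma geo_sum_le (m : ℕ) : ∑ j ∈ Finset.Icc 1 m, ((1:ℝ)/3)^j ≤ 1/2 - (1/2) * (1/3)^m := by
  induction m with
  | zero => simp
  | succ m ih =>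
    rw [Finset.sum_Icc_succ_top (by omega)]
    have : ((1:ℝ)/3)^(m+1) = (1/3) * (1/3)^m := by ring
    rw [this]
    nlinarith [pow_nonneg (by norm_num : (0:ℝ) ≤ 1/3) m]

lemma starsFinset_card_le (k : ℕ) : ∀ s : ℕ, ((starsFinset k s).card : ℝ) ≤ (3*k/2)^s := by
  intro s
  induction s using Nat.strong_induction_on with
  | _ s ih =>
    match s with
    | 0 =>
      have h := Finset.card_le_card (starsFinset_zero k)
      simp only [Finset.card_singleton] at h
      calc ((starsFinset k 0).card : ℝ) ≤ 1 := by exact_mod_cast h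
        _ = (3*k/2)^0 := by norm_num
    | (s+1) =>
      have hks : (0:ℝ) ≤ 3*k/2 := by positivity
      set T := Finset.univ.filter fun b : Fin k → Bool => 1 ≤ cnt b ∧ cnt b ≤ s+1 with hT
      have h1 : (starsFinset k (s+1)).card ≤ ∑ b ∈ T, (starsFinset k (s+1 - cnt b)).card := by
        calc (starsFinset k (s+1)).card
            ≤ (T.biUnion fun b => (starsFinset k (s+1 - cnt b)).image (List.cons b)).card :=
              Finset.card_le_card (starsFinset_succ_subset k s)
          _ ≤ ∑ b ∈ T, ((starsFinset k (s+1 - cnt b)).image (List.cons b)).card :=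
              Finset.card_biUnion_le
          _ ≤ ∑ b ∈ T, (starsFinset k (s+1 - cnt b)).card :=
              Finset.sum_le_sum fun b _ => Finset.card_image_le
      have h2 : ((starsFinset k (s+1)).card : ℝ) ≤ ∑ b ∈ T, ((3:ℝ)*k/2)^(s+1 - cnt b) := by
        calc ((starsFinset k (s+1)).card : ℝ)
            ≤ (∑ b ∈ T, ((starsFinset k (s+1 - cnt b)).card : ℝ)) := by exact_mod_cast h1
          _ ≤ ∑ b ∈ T, ((3:ℝ)*k/2)^(s+1 - cnt b) := by
              refine Finset.sum_le_sum fun b hb => ?_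
              apply ih
              simp only [hT, Finset.mem_filter] at hb
              omega
      have h3 : ∑ b ∈ T, ((3:ℝ)*k/2)^(s+1 - cnt b)
          = ∑ j ∈ Finset.Icc 1 (s+1), ∑ b ∈ T.filter (fun b => cnt b = j),
              ((3:ℝ)*k/2)^(s+1 - cnt b) := by
        rw [Finset.sum_fiberwise_of_maps_to]
        intro b hb
        simp only [hT, Finset.mem_filter] at hb
        simp only [Finset.mem_Icc]
        omega
      have h4 : ∀ j ∈ Finset.Icc 1 (s+1),
          ∑ b ∈ T.filter (fun b => cnt b = j), ((3:ℝ)*k/2)^(s+1 - cnt b)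
            ≤ 2 * (1/3)^j * ((3:ℝ)*k/2)^(s+1) := by
        intro j hj
        rw [Finset.mem_Icc] at hj
        have hsum : ∑ b ∈ T.filter (fun b => cnt b = j), ((3:ℝ)*k/2)^(s+1 - cnt b)
            = (T.filter (fun b => cnt b = j)).card * ((3:ℝ)*k/2)^(s+1-j) := by
          rw [Finset.sum_congr rfl (fun b hb => ?_), Finset.sum_const, nsmul_eq_mul]
          have hb' : cnt b = j := by
            simp only [Finset.mem_filter] at hb
            exact hb.2
          rw [hb']
        rw [hsum]
        have hcard : ((T.filter (fun b => cnt b = j)).card : ℝ) ≤ k.choose j := by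
          have : (T.filter (fun b => cnt b = j)).card ≤ k.choose j := by
            refine le_trans (Finset.card_le_card ?_) (card_cnt_le k j)
            intro b hb
            simp only [hT, Finset.mem_filter] at hb ⊢
            exact ⟨Finset.mem_univ b, hb.2⟩
          exact_mod_cast this
        have hch : ((k.choose j : ℝ)) * 2^(j-1) ≤ (k:ℝ)^j := by
          exact_mod_cast choose_two_pow_le k j hj.1
        have h2j : (2:ℝ)^j = 2 * 2^(j-1) := by
          rw [← pow_succ']
          congr 1
          omega
        have hchd : ((k.choose j : ℝ)) ≤ 2 * ((k:ℝ)^j / 2^j) := by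
          have hpos : (0:ℝ) < 2^(j-1) := by positivity
          have e : 2 * ((k:ℝ)^j / 2^j) = (k:ℝ)^j / 2^(j-1) := by
            rw [h2j]
            field_simp
          rw [e, le_div_iff₀ hpos]
          exact hch
        have hpow : ((3:ℝ)*k/2)^(s+1) = (3*k/2)^j * ((3:ℝ)*k/2)^(s+1-j) := by
          rw [← pow_add]
          congr 1
          omega
        have hmul : ((1:ℝ)/3)^j * ((3:ℝ)*k/2)^j = (k:ℝ)^j / 2^j := by
          rw [← mul_pow, ← div_pow]
          congr 1
          ring
        have key : 2 * ((1:ℝ)/3)^j * ((3:ℝ)*k/2)^(s+1)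
            = 2 * ((k:ℝ)^j/2^j) * ((3:ℝ)*k/2)^(s+1-j) := by
          rw [hpow, ← hmul]
          ring
        rw [key]
        exact mul_le_mul_of_nonneg_right ((hcard.trans hchd)) (by positivity)
      have hgeo := geo_sum_le (s+1)
      have hC : (0:ℝ) ≤ ((3:ℝ)*k/2)^(s+1) := by positivity
      have hfin : ∑ j ∈ Finset.Icc 1 (s+1), 2 * ((1:ℝ)/3)^j * ((3:ℝ)*k/2)^(s+1)
          ≤ ((3:ℝ)*k/2)^(s+1) := by
        rw [← Finset.sum_mul]
        have : ∑ j ∈ Finset.Icc 1 (s+1), 2 * ((1:ℝ)/3)^j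
            = 2 * ∑ j ∈ Finset.Icc 1 (s+1), ((1:ℝ)/3)^j := by
          rw [Finset.mul_sum]
        rw [this]
        nlinarith [pow_nonneg (by norm_num : (0:ℝ) ≤ 1/3) (s+1)]
      calc ((starsFinset k (s+1)).card : ℝ)
          ≤ ∑ b ∈ T, ((3:ℝ)*k/2)^(s+1 - cnt b) := h2
        _ = _ := h3
        _ ≤ ∑ j ∈ Finset.Icc 1 (s+1), 2 * ((1:ℝ)/3)^j * ((3:ℝ)*k/2)^(s+1) :=
            Finset.sum_le_sum h4
        _ ≤ ((3:ℝ)*k/2)^(s+1) := hfin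

lemma choose_ratio (n ℓ : ℕ) (hln : ℓ ≤ n) :
    ∀ s, s ≤ ℓ → n.choose (ℓ - s) * (n - ℓ)^s ≤ n.choose ℓ * ℓ^s := by
  intro s
  induction s with
  | zero => simp
  | succ s ih =>
    intro hs
    have ih' := ih (by omega)
    have hr : ℓ - (s+1) + 1 = ℓ - s := by omega
    have h1 : n.choose (ℓ - (s+1) + 1) * (ℓ - (s+1) + 1)
        = n.choose (ℓ - (s+1)) * (n - (ℓ - (s+1))) := Nat.choose_succ_right_eq n (ℓ - (s+1))
    rw [hr] at h1
    have key : n.choose (ℓ - (s+1)) * (n - ℓ) ≤ n.choose (ℓ - s) * ℓ := by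
      calc n.choose (ℓ - (s+1)) * (n - ℓ)
          ≤ n.choose (ℓ - (s+1)) * (n - (ℓ - (s+1))) :=
            Nat.mul_le_mul_left _ (by omega)
        _ = n.choose (ℓ - s) * (ℓ - s) := h1.symm
        _ ≤ n.choose (ℓ - s) * ℓ := Nat.mul_le_mul_left _ (by omega)
    calc n.choose (ℓ - (s+1)) * (n - ℓ)^(s+1)
        = (n.choose (ℓ - (s+1)) * (n - ℓ)) * (n - ℓ)^s := by ring
      _ ≤ (n.choose (ℓ - s) * ℓ) * (n - ℓ)^s := Nat.mul_le_mul_right _ key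
      _ = ℓ * (n.choose (ℓ - s) * (n - ℓ)^s) := by ring
      _ ≤ ℓ * (n.choose ℓ * ℓ^s) := Nat.mul_le_mul_left _ ih'
      _ = n.choose ℓ * ℓ^(s+1) := by ring

/-- for positive integers `n, ℓ, s, k` with `s ≤ ℓ ≤ n` and
`p = ℓ/n < 1/7`, we have
`(|R^{ℓ-s}_n| · |stars(k,s)| · 2^s) / |R^ℓ_n| < (7pk)^s`,
where `|R^ℓ_n| = C(n,ℓ)·2^{n-ℓ}`. -/
theorem stars_ratio_bound (n ℓ s k : ℕ) (hn : 0 < n) (hℓ : 0 < ℓ) (hs : 0 < s)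
    (hk : 0 < k) (hsl : s ≤ ℓ) (hln : ℓ ≤ n)
    (p : ℝ) (hp : p = (ℓ : ℝ) / n) (hp7 : p < 1 / 7) :
    ((n.choose (ℓ - s) * 2 ^ (n - (ℓ - s)) : ℕ) : ℝ) * (starsSet k s).ncard * 2 ^ s
        / ((n.choose ℓ * 2 ^ (n - ℓ) : ℕ) : ℝ)
      < (7 * p * k) ^ s := by
  have hn' : (0:ℝ) < n := by exact_mod_cast hn
  have hℓ' : (0:ℝ) < ℓ := by exact_mod_cast hℓ
  have hk' : (0:ℝ) < k := by exact_mod_cast hk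
  -- 7ℓ < n
  have h7 : 7 * ℓ < n := by
    have h1 : (ℓ:ℝ) / n < 1 / 7 := hp ▸ hp7
    have h2 : (ℓ:ℝ) * 7 < 1 * n := (div_lt_div_iff₀ hn' (by norm_num)).mp h1
    have : (7:ℝ) * ℓ < n := by linarith
    exact_mod_cast this
  have hnl : 0 < n - ℓ := by omega
  have hnl' : (0:ℝ) < ((n - ℓ : ℕ) : ℝ) := by exact_mod_cast hnl
  have hnlcast : ((n - ℓ : ℕ) : ℝ) = (n:ℝ) - ℓ := by
    push_cast [Nat.cast_sub hln]; ring
  -- M bound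
  have hM : ((starsSet k s).ncard : ℝ) ≤ (3*(k:ℝ)/2)^s := by
    have hsub : (starsSet k s).ncard ≤ (starsFinset k s).card := by
      have h := Set.ncard_le_ncard (starsSet_subset k s) (Finset.finite_toSet _)
      rwa [Set.ncard_coe_finset] at h
    calc ((starsSet k s).ncard : ℝ) ≤ ((starsFinset k s).card : ℝ) := by exact_mod_cast hsub
      _ ≤ (3*(k:ℝ)/2)^s := starsFinset_card_le k s
  -- choose ratio, cast
  have hratio : ((n.choose (ℓ - s) : ℕ) : ℝ) * ((n - ℓ : ℕ):ℝ)^s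
      ≤ ((n.choose ℓ : ℕ) : ℝ) * (ℓ:ℝ)^s := by
    exact_mod_cast choose_ratio n ℓ hln s hsl
  set A : ℝ := ((n.choose (ℓ - s) : ℕ) : ℝ) with hA
  set B : ℝ := ((n.choose ℓ : ℕ) : ℝ) with hB
  set M : ℝ := ((starsSet k s).ncard : ℝ) with hMdef
  set P : ℝ := (2:ℝ)^(n-ℓ) with hP
  set nl : ℝ := ((n - ℓ : ℕ) : ℝ) with hnldef
  have hBpos : (0:ℝ) < B := by
    rw [hB]; exact_mod_cast Nat.choose_pos hln
  have hPpos : (0:ℝ) < P := by positivity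
  have hMnn : (0:ℝ) ≤ M := by rw [hMdef]; positivity
  have hAnn : (0:ℝ) ≤ A := by rw [hA]; positivity
  -- rewrite LHS
  have hsub2 : n - (ℓ - s) = (n - ℓ) + s := by omega
  have hLHS : ((n.choose (ℓ - s) * 2 ^ (n - (ℓ - s)) : ℕ) : ℝ) * (starsSet k s).ncard * 2 ^ s
        / ((n.choose ℓ * 2 ^ (n - ℓ) : ℕ) : ℝ)
      = A * (P * 2^s) * M * 2^s / (B * P) := by
    rw [hsub2]
    push_cast [pow_add]
    ring
  rw [hLHS]
  -- step 1 : ≤ (6kℓ/nl)^s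
  have step1 : A * (P * 2^s) * M * 2^s / (B * P) ≤ (6*(k:ℝ)*ℓ/nl)^s := by
    rw [div_pow, div_le_div_iff₀ (by positivity) (by positivity)]
    have e6 : ((3:ℝ)*k/2)^s * 4^s = (6*(k:ℝ))^s := by
      rw [← mul_pow]; congr 1; ring
    have hM4 : M * 2^s * 2^s ≤ (6*(k:ℝ))^s := by
      have e : M * 2^s * 2^s = M * 4^s := by
        rw [mul_assoc, ← mul_pow]; norm_num
      rw [e, ← e6]
      exact mul_le_mul_of_nonneg_right hM (by positivity)
    have hprod : (A * nl^s) * (M * 2^s * 2^s) ≤ (B * (ℓ:ℝ)^s) * (6*(k:ℝ))^s :=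
      mul_le_mul hratio hM4 (by positivity) (by positivity)
    have hmul := mul_le_mul_of_nonneg_left hprod (le_of_lt hPpos)
    calc A * (P * 2^s) * M * 2^s * nl^s = P * ((A * nl^s) * (M * 2^s * 2^s)) := by ring
      _ ≤ P * ((B * (ℓ:ℝ)^s) * (6*(k:ℝ))^s) := hmul
      _ = (6*(k:ℝ))^s * (ℓ:ℝ)^s * (B * P) := by ring
      _ = (6*(k:ℝ)*ℓ)^s * (B * P) := by rw [mul_pow (6*(k:ℝ)) (ℓ:ℝ)]
  -- step 2 : (6kℓ/nl)^s < (7pk)^s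
  have step2 : (6*(k:ℝ)*ℓ/nl)^s < (7 * p * k) ^ s := by
    have hbase : 6*(k:ℝ)*ℓ/nl < 7 * p * k := by
      rw [hp]
      have e : 7 * ((ℓ:ℝ)/n) * k = 7*(ℓ:ℝ)*k/n := by ring
      rw [e, div_lt_div_iff₀ hnl' hn']
      rw [hnldef, Nat.cast_sub hln]
      have h7' : (7:ℝ) * ℓ < n := by exact_mod_cast h7
      nlinarith [mul_pos hk' hℓ']
    exact pow_lt_pow_left₀ hbase (by positivity) (by omega)
  exact lt_of_le_of_lt step1 step2
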